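/- Let 1 ≤ j ≤ n be integers. Then for every u ∈ ℂ, Σ_{k=j}^{n} binom(n+k, n−k) binom(2k, k−j) u^k = u^j · P_{n−j}^{(2j,0)}(2u+1), where P_{n−j}^{(2j,0)} is the Jacobi polynomial of degree n−j with parameters (2j, 0). -/

import Mathlib

open scoped BigOperators

/-- Pochhammer symbol `(a)_k = a(a+1)⋯(a+k-1)` over ℂ. -/
noncomputable def pochC (a : ℂ) (k : ℕ) : ℂ := ∏ i ∈ Finset.range k, (a + i)

/-- Jacobi polynomial `P_n^{(a,b)}(x)`. -/
noncomputable def Jac (a b : ℝ) (n : ℕ) (x : ℂ) : ℂ :=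
  (pochC ((a : ℂ) + 1) n / (n.factorial : ℂ)) * ∑ k ∈ Finset.range (n + 1),
    pochC (-(n : ℂ)) k * pochC ((n : ℂ) + a + b + 1) k /
      (pochC ((a : ℂ) + 1) k * (k.factorial : ℂ)) * ((1 - x) / 2) ^ k

lemma fac_mul_pochC (N k : ℕ) : (N.factorial : ℂ) * pochC ((N : ℂ) + 1) k = ((N + k).factorial : ℂ) := by
  induction k with
  | zero => simp [pochC]
  | succ k ih =>
    rw [pochC, Finset.prod_range_succ, ← mul_assoc]
    rw [pochC] at ih
    rw [ih, show N + (k+1) = (N+k) + 1 from rfl, Nat.factorial_succ]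
    push_cast
    ring

lemma pochC_eq (N k : ℕ) : pochC ((N : ℂ) + 1) k = ((N + k).factorial : ℂ) / (N.factorial : ℂ) := by
  rw [eq_div_iff (by exact_mod_cast N.factorial_ne_zero), mul_comm, fac_mul_pochC]

lemma fac_mul_pochC_neg (m i : ℕ) (h : i ≤ m) :
    ((m - i).factorial : ℂ) * pochC (-(m : ℂ)) i = (-1) ^ i * (m.factorial : ℂ) := by
  induction i with
  | zero => simp [pochC]
  | succ i ih =>
    have hi : i ≤ m := Nat.le_of_succ_le h
    rw [pochC, Finset.prod_range_succ, ← pochC]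
    have hmi : -(m : ℂ) + i = -(((m - i : ℕ) : ℂ)) := by
      push_cast [hi]; ring
    have hfac : ((m - i).factorial : ℂ) = ((m - (i+1)).factorial : ℂ) * ((m - i : ℕ) : ℂ) := by
      rw [show m - i = (m - (i+1)) + 1 by omega, Nat.factorial_succ]
      push_cast
      ring
    rw [hmi]
    calc ((m - (i+1)).factorial : ℂ) * (pochC (-(m:ℂ)) i * -(((m - i : ℕ) : ℂ)))
        = -((((m - (i+1)).factorial : ℂ) * ((m - i : ℕ) : ℂ)) * pochC (-(m:ℂ)) i) := by ring
      _ = -(((m - i).factorial : ℂ) * pochC (-(m:ℂ)) i) := by rw [← hfac]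
      _ = -((-1) ^ i * (m.factorial : ℂ)) := by rw [ih hi]
      _ = (-1) ^ (i+1) * (m.factorial : ℂ) := by ring

lemma pochC_neg (m i : ℕ) (h : i ≤ m) :
    pochC (-(m : ℂ)) i = (-1) ^ i * ((m.factorial : ℂ) / ((m - i).factorial : ℂ)) := by
  have f3 : ((m - i).factorial : ℂ) ≠ 0 := by exact_mod_cast (m - i).factorial_ne_zero
  rw [← mul_div_assoc, eq_div_iff f3, mul_comm, fac_mul_pochC_neg m i h]

lemma key (j m i : ℕ) (h : i ≤ m) :
    (m + 2*j + i).choose (m - i) * ((2*j + 2*i).choose i) *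
      ((m - i).factorial * (i.factorial * (2*j + i).factorial)) = (m + 2*j + i).factorial := by
  have h1 := Nat.choose_mul_factorial_mul_factorial (show m - i ≤ m + 2*j + i by omega)
  have h2 := Nat.choose_mul_factorial_mul_factorial (show i ≤ 2*j + 2*i by omega)
  rw [show m + 2*j + i - (m - i) = 2*j + 2*i by omega] at h1
  rw [show 2*j + 2*i - i = 2*j + i by omega] at h2
  rw [← h2] at h1
  rw [← h1]
  ring

theorem stmt13 (j n : ℕ) (hj : 1 ≤ j) (hjn : j ≤ n) (u : ℂ) :
    ∑ k ∈ Finset.Icc j n, ((n + k).choose (n - k) : ℂ) * ((2 * k).choose (k - j) : ℂ) * u ^ k =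
      u ^ j * Jac (2 * j) 0 (n - j) (2 * u + 1) := by
  obtain ⟨m, rfl⟩ : ∃ m, n = j + m := ⟨n - j, by omega⟩
  rw [show j + m - j = m by omega]
  rw [← Finset.Ico_add_one_right_eq_Icc, Finset.sum_Ico_eq_sum_range,
    show j + m + 1 - j = m + 1 by omega]
  rw [Jac, Finset.mul_sum, Finset.mul_sum]
  refine Finset.sum_congr rfl fun i hi => ?_
  have him : i ≤ m := by simpa [Nat.lt_succ_iff] using Finset.mem_range.mp hi
  rw [show j + m + (j + i) = (m + 2*j + i) by omega, show j + m - (j + i) = m - i by omega,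
    show 2 * (j + i) = 2*j + 2*i by omega, show j + i - j = i by omega]
  have e1 : ((2 * (j:ℝ) : ℝ) : ℂ) + 1 = ((2*j : ℕ) : ℂ) + 1 := by push_cast; ring
  have e2 : ((m:ℂ)) + ((2 * (j:ℝ) : ℝ) : ℂ) + ((0:ℝ):ℂ) + 1 = ((m + 2*j : ℕ) : ℂ) + 1 := by
    push_cast; ring
  have hu : (1 - (2*u + 1)) / 2 = -u := by ring
  rw [e1, e2, hu]
  have hterm : ∀ (A B : ℂ), pochC (-(m:ℂ)) i * A / B * (-u)^i
      = ((m.factorial : ℂ) / ((m - i).factorial : ℂ)) * A / B * u^i := by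
    intro A B
    rw [pochC_neg m i him, neg_pow]
    have h11 : ((-1:ℂ))^i * (-1)^i = 1 := by rw [← mul_pow]; norm_num
    linear_combination ((m.factorial : ℂ) / ((m - i).factorial : ℂ)) * A / B * u^i * h11
  rw [hterm, pochC_eq, pochC_eq, pochC_eq]
  have f1 : ((2*j).factorial : ℂ) ≠ 0 := by exact_mod_cast (2*j).factorial_ne_zero
  have f2 : ((m).factorial : ℂ) ≠ 0 := by exact_mod_cast m.factorial_ne_zero
  have f3 : ((m - i).factorial : ℂ) ≠ 0 := by exact_mod_cast (m-i).factorial_ne_zero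
  have f4 : ((m + 2*j).factorial : ℂ) ≠ 0 := by exact_mod_cast (m + 2*j).factorial_ne_zero
  have f5 : ((2*j + i).factorial : ℂ) ≠ 0 := by exact_mod_cast (2*j + i).factorial_ne_zero
  have f6 : ((i).factorial : ℂ) ≠ 0 := by exact_mod_cast i.factorial_ne_zero
  have hkey : (((m + 2*j + i).choose (m - i) : ℕ) : ℂ) * (((2*j + 2*i).choose i : ℕ) : ℂ) *
      (((m - i).factorial : ℂ) * ((i.factorial : ℂ) * ((2*j + i).factorial : ℂ)))
      = ((m + 2*j + i).factorial : ℂ) := by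
    exact_mod_cast congrArg (Nat.cast : ℕ → ℂ) (key j m i him)
  rw [pow_add]
  field_simp
  have h24 : ((m + 2*j).factorial : ℂ) = ((2*j + m).factorial : ℂ) := by rw [Nat.add_comm]
  linear_combination u^j * u^i * ((m + 2*j).factorial : ℂ) * hkey +
    u^j * u^i * ((m + 2*j + i).factorial : ℂ) * h24
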